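/- arXiv:math/0601509 — 2 statements merged into one kernel-verified Lean document; each statement's English description precedes it below -/
import Mathlib

section
/- Let G be a locally compact group. Then S¹A(G) = A(G) ∩ L¹(G) equals A(G) as a set (equivalently, with equivalent norms) if and only if G is compact. Moreover, when G is compact, the identity map j : A(G) → S¹A(G) is bounded with 2 ≤ ‖j‖ ≤ 2 (i.e., ‖j‖ = 2 for normalized Haar measure), since ‖u‖_{S¹A} = ‖u·1‖_{S¹A} ≤ ‖u‖_{A(G)} ‖1‖_{S¹A} = 2‖u‖_{A(G)} and ‖j(1)‖ = 2. -/
open MeasureTheory Filter Topology ComplexConjugate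
open scoped ENNReal

noncomputable section

variable {G : Type} [Group G] [TopologicalSpace G] [IsTopologicalGroup G]
  [LocallyCompactSpace G] [MeasurableSpace G] [BorelSpace G]

/-- Convolution of two functions: `(f ∗ g)(s) = ∫ f(t) g(t⁻¹ s) dt`. -/
def conv (μ : Measure G) (f g : G → ℂ) : G → ℂ := fun s => ∫ t, f t * g (t⁻¹ * s) ∂μ

/-- Inversion: `fˇ(t) = f(t⁻¹)`. -/
def checkFun (f : G → ℂ) : G → ℂ := fun t => f t⁻¹

/-- `u` is the coefficient function `s ↦ ⟨λ(s)f, g⟩ = ∫ f(s⁻¹ t) conj (g t) dt`. -/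
def IsCoeff (μ : Measure G) (u f g : G → ℂ) : Prop :=
  ∀ s, u s = ∫ t, f (s⁻¹ * t) * conj (g t) ∂μ

/-- Membership in the Fourier algebra `A(G)`. -/
def InFourier (μ : Measure G) (u : G → ℂ) : Prop :=
  ∃ f g : G → ℂ, MemLp f 2 μ ∧ MemLp g 2 μ ∧ IsCoeff μ u f g

/-- The Fourier algebra norm `‖u‖_{A(G)} = inf ‖f‖₂ ‖g‖₂`. -/
def ANorm (μ : Measure G) (u : G → ℂ) : ℝ :=
  sInf {c | ∃ f g : G → ℂ, MemLp f 2 μ ∧ MemLp g 2 μ ∧ IsCoeff μ u f g ∧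
    c = (eLpNorm f 2 μ).toReal * (eLpNorm g 2 μ).toReal}

/-- The norm of the Segal algebra `S¹A(G) = A(G) ∩ L¹(G)`. -/
def SoneANorm (μ : Measure G) (u : G → ℂ) : ℝ := ANorm μ u + (eLpNorm u 1 μ).toReal

/-- The left regular representation `λ(s)f = f(s⁻¹ ·)` on `L²(G)`. -/
def lam (μ : Measure G) [μ.IsMulLeftInvariant] (s : G) : Lp ℂ 2 μ →L[ℂ] Lp ℂ 2 μ :=
  (Lp.compMeasurePreservingₗᵢ ℂ (fun t => s⁻¹ * t)
    (measurePreserving_mul_left μ s⁻¹)).toContinuousLinearMap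

/-- The group von Neumann algebra `VN(G)`, realized as the double commutant of the
left translation operators on `L²(G)`. -/
def VN (μ : Measure G) [μ.IsMulLeftInvariant] : Set (Lp ℂ 2 μ →L[ℂ] Lp ℂ 2 μ) :=
  {T | ∀ S : Lp ℂ 2 μ →L[ℂ] Lp ℂ 2 μ, (∀ s : G, Commute S (lam μ s)) → Commute T S}

/-- `T = Λ(φ)`: `T` is a bounded operator on `L²(G)` extending convolution by `φ`
on `L²(G) ∩ L¹(G)ˇ`. -/
def IsLam (μ : Measure G) [μ.IsMulLeftInvariant] (φ : G → ℂ)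
    (T : Lp ℂ 2 μ →L[ℂ] Lp ℂ 2 μ) : Prop :=
  ∀ (f : G → ℂ) (hf : MemLp f 2 μ), Integrable (checkFun f) μ →
    (T (hf.toLp f) : G → ℂ) =ᵐ[μ] conv μ φ f

/-- `φ ∈ Conv^∞(G)`: `φ ∈ L^∞(G)` and convolution by `φ` extends to a bounded
operator on `L²(G)`. -/
def IsConvolver (μ : Measure G) [μ.IsMulLeftInvariant] (φ : G → ℂ) : Prop :=
  MemLp φ ⊤ μ ∧ ∃ T, IsLam μ φ T

/-- The set `Λ(Conv^∞(G)) ⊆ VN(G)`. -/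
def LamConv (μ : Measure G) [μ.IsMulLeftInvariant] : Set (Lp ℂ 2 μ →L[ℂ] Lp ℂ 2 μ) :=
  {T | ∃ φ : G → ℂ, MemLp φ ⊤ μ ∧ IsLam μ φ T}


open scoped Pointwise

lemma exists_W : ∃ W : Set G, IsCompact W ∧ IsClosed W ∧ W ∈ 𝓝 (1:G) ∧ W⁻¹ = W := by
  obtain ⟨K, hKc, hKn⟩ := exists_compact_mem_nhds (1:G)
  refine ⟨closure (K ∩ K⁻¹), ?_, isClosed_closure, ?_, ?_⟩
  · exact hKc.closure.of_isClosed_subset isClosed_closure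
      (closure_mono Set.inter_subset_left)
  · refine mem_of_superset (Filter.inter_mem hKn ?_) subset_closure
    simpa using inv_mem_nhds_one G hKn
  · rw [inv_closure]
    congr 1
    simp [Set.inter_comm]


lemma exists_seq (hnc : ¬ IsCompact (Set.univ : Set G)) {C : Set G} (hC : IsCompact C) :
    ∃ s : ℕ → G, ∀ m n : ℕ, m < n → s n ∉ s m • C := by
  classical
  have key : ∀ L : List G, ∃ x : G, ∀ y ∈ L, x ∉ y • C := by
    intro L
    by_contra h
    push_neg at h
    have hcov : (Set.univ : Set G) ⊆ ⋃ y ∈ L, y • C := by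
      intro x _
      obtain ⟨y, hy, hxy⟩ := h x
      exact Set.mem_biUnion hy hxy
    have hcomp : IsCompact (⋃ y ∈ L, y • C) := by
      have : (⋃ y ∈ L, y • C) = ⋃ y ∈ L.toFinset, y • C := by simp
      rw [this]
      exact L.toFinset.isCompact_biUnion (fun y _ => hC.smul y)
    exact hnc (Set.univ_subset_iff.mp hcov ▸ hcomp)
  let next : List G → G := fun L => (key L).choose
  let Ls : ℕ → List G := fun n => Nat.rec [] (fun _ L => L ++ [next L]) n
  refine ⟨fun n => next (Ls n), ?_⟩
  have hmem : ∀ m n : ℕ, m < n → next (Ls m) ∈ Ls n := by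
    intro m n h
    induction n with
    | zero => omega
    | succ k ih =>
      have : Ls (k+1) = Ls k ++ [next (Ls k)] := rfl
      rw [this, List.mem_append]
      rcases Nat.lt_succ_iff_lt_or_eq.mp h with h' | h'
      · exact Or.inl (ih h')
      · subst h'; exact Or.inr (List.mem_singleton.mpr rfl)
  intro m n h
  exact (key (Ls n)).choose_spec (next (Ls m)) (hmem m n h)

lemma noncompact_witness (μ : Measure G) [μ.IsHaarMeasure]
    (hnc : ¬ IsCompact (Set.univ : Set G)) :
    ∃ u : G → ℂ, InFourier μ u ∧ ¬ Integrable u μ := by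
  classical
  obtain ⟨W, hWc, hWcl, hWn, hWsymm⟩ := exists_W (G := G)
  set V : Set G := closure (W * W) with hVdef
  have hVc : IsCompact V := (hWc.mul hWc).closure
  have hVcl : IsClosed V := isClosed_closure
  have hWWV : W * W ⊆ V := subset_closure
  have hVm : MeasurableSet V := hVcl.measurableSet
  obtain ⟨s, hsep⟩ := exists_seq hnc (hWc.mul hWc)
  set c := μ W with hcdef
  have hc0 : 0 < c := by
    have h1 : (1:G) ∈ interior W := mem_interior_iff_mem_nhds.2 hWn
    calc (0:ℝ≥0∞) < μ (interior W) := isOpen_interior.measure_pos μ ⟨1, h1⟩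
    _ ≤ c := measure_mono interior_subset
  have hcfin : c < ⊤ := hWc.measure_lt_top
  -- the disjoint translates
  set A : ℕ → Set G := fun n => s n • W with hAdef
  have hA : ∀ n, MeasurableSet (A n) := fun n => (hWcl.smul (s n)).measurableSet
  have hdisj : Pairwise (Function.onFun Disjoint A) := by
    have key : ∀ m n, m < n → Disjoint (A m) (A n) := by
      intro m n hmn
      rw [Set.disjoint_left]
      rintro x ⟨w1, hw1, rfl⟩ ⟨w2, hw2, hx⟩
      apply hsep m n hmn
      have hx' : s n * w2 = s m * w1 := by simpa [smul_eq_mul] using hx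
      have hsn : s n = s m * (w1 * w2⁻¹) := by
        rw [← mul_assoc, ← hx']
        group
      refine ⟨w1 * w2⁻¹, ?_, ?_⟩
      · exact Set.mul_mem_mul hw1 (by rw [← hWsymm]; exact Set.inv_mem_inv.mpr hw2)
      · simpa [smul_eq_mul] using hsn.symm
    intro m n hmn
    rcases lt_or_gt_of_ne hmn with h | h
    · exact key m n h
    · exact (key n m h).symm
  have hmuA : ∀ n, μ (A n) = c := fun n => measure_smul μ (s n) W
  -- coefficients
  set a : ℕ → ℝ := fun n => 1 / ((n:ℝ) + 1) with hadef
  have ha_pos : ∀ n, 0 < a n := fun n => by positivity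
  have ha_le_one : ∀ n, a n ≤ 1 := fun n => by
    rw [hadef]
    rw [div_le_one (by positivity)]
    simp [Nat.cast_nonneg]
  -- the L² function g
  set γ : G → ℝ≥0∞ := fun t => ∑' n, (A n).indicator (fun _ => ENNReal.ofReal (a n)) t
    with hγdef
  have hγmeas : Measurable γ :=
    Measurable.ennreal_tsum fun n => measurable_const.indicator (hA n)
  have hval : ∀ n t, t ∈ A n → γ t = ENNReal.ofReal (a n) := by
    intro n t ht
    have hrw : γ t = ∑' m, (A m).indicator (fun _ => ENNReal.ofReal (a m)) t := rfl
    rw [hrw]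
    have : ∀ m, m ≠ n → (A m).indicator (fun _ => ENNReal.ofReal (a m)) t = 0 := by
      intro m hm
      apply Set.indicator_of_notMem
      exact fun htm => Set.disjoint_left.1 (hdisj hm) htm ht
    rw [tsum_eq_single n this]
    simp [Set.indicator_of_mem ht]
  have hval0 : ∀ t, (∀ n, t ∉ A n) → γ t = 0 := by
    intro t ht
    have hrw : γ t = ∑' m, (A m).indicator (fun _ => ENNReal.ofReal (a m)) t := rfl
    rw [hrw]
    convert tsum_zero with n
    exact Set.indicator_of_notMem (ht n) _
  have hγ_le_one : ∀ t, γ t ≤ 1 := by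
    intro t
    by_cases h : ∃ n, t ∈ A n
    · obtain ⟨n, hn⟩ := h
      rw [hval n t hn]
      exact ENNReal.ofReal_le_one.2 (ha_le_one n)
    · push_neg at h
      rw [hval0 t h]
      exact zero_le_one
  have hγ_ne_top : ∀ t, γ t ≠ ⊤ := fun t => (lt_of_le_of_lt (hγ_le_one t) ENNReal.one_lt_top).ne
  set w : G → ℝ := fun t => (γ t).toReal with hwdef
  have hw_nonneg : ∀ t, 0 ≤ w t := fun t => ENNReal.toReal_nonneg
  have hw_le_one : ∀ t, w t ≤ 1 := fun t => by
    rw [hwdef]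
    calc (γ t).toReal ≤ (1:ℝ≥0∞).toReal :=
      ENNReal.toReal_mono ENNReal.one_ne_top (hγ_le_one t)
    _ = 1 := by simp
  have hwmeas : Measurable w := hγmeas.ennreal_toReal
  set g : G → ℂ := fun t => ((w t : ℝ) : ℂ) with hgdef
  have hgmeas : Measurable g := Complex.measurable_ofReal.comp hwmeas
  set f : G → ℂ := V.indicator (fun _ => (1:ℂ)) with hfdef
  have hf2 : MemLp f 2 μ := memLp_indicator_const 2 hVm 1 (Or.inr hVc.measure_lt_top.ne)
  -- MemLp g 2
  have hnng : ∀ t, (‖g t‖₊ : ℝ≥0∞) = γ t := by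
    intro t
    rw [hgdef]
    have : ‖((w t : ℝ) : ℂ)‖₊ = ‖w t‖₊ := by
      simp [Complex.nnnorm_real]
    rw [this, ← enorm_eq_nnnorm, Real.enorm_eq_ofReal (hw_nonneg t), hwdef, ENNReal.ofReal_toReal (hγ_ne_top t)]
  have hg2 : MemLp g 2 μ := by
    refine ⟨hgmeas.aestronglyMeasurable, ?_⟩
    rw [eLpNorm_eq_lintegral_rpow_enorm_toReal (by norm_num) (by norm_num)]
    have htoReal : (2:ℝ≥0∞).toReal = 2 := by norm_num
    rw [htoReal]
    have hpt : ∀ t, (‖g t‖₊ : ℝ≥0∞) ^ (2:ℝ)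
        = ∑' n, (A n).indicator (fun _ => ENNReal.ofReal (a n) ^ (2:ℝ)) t := by
      intro t
      rw [hnng t]
      by_cases h : ∃ n, t ∈ A n
      · obtain ⟨n, hn⟩ := h
        rw [hval n t hn]
        have : ∀ m, m ≠ n → (A m).indicator (fun _ => ENNReal.ofReal (a m) ^ (2:ℝ)) t = 0 := by
          intro m hm
          exact Set.indicator_of_notMem (fun htm => Set.disjoint_left.1 (hdisj hm) htm hn) _
        rw [tsum_eq_single n this, Set.indicator_of_mem hn]
      · push_neg at h
        rw [hval0 t h]
        rw [ENNReal.zero_rpow_of_pos (by norm_num)]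
        symm
        convert tsum_zero with n
        exact Set.indicator_of_notMem (h n) _
    have hlint : ∫⁻ t, (‖g t‖₊ : ℝ≥0∞) ^ (2:ℝ) ∂μ
        = ∑' n, ENNReal.ofReal (a n) ^ (2:ℝ) * c := by
      calc ∫⁻ t, (‖g t‖₊ : ℝ≥0∞) ^ (2:ℝ) ∂μ
          = ∫⁻ t, ∑' n, (A n).indicator (fun _ => ENNReal.ofReal (a n) ^ (2:ℝ)) t ∂μ := by
            exact lintegral_congr hpt
      _ = ∑' n, ∫⁻ t, (A n).indicator (fun _ => ENNReal.ofReal (a n) ^ (2:ℝ)) t ∂μ :=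
            lintegral_tsum fun n => (measurable_const.indicator (hA n)).aemeasurable
      _ = ∑' n, ENNReal.ofReal (a n) ^ (2:ℝ) * c := by
            congr 1
            ext n
            rw [lintegral_indicator (hA n), setLIntegral_const, hmuA n]
    simp only [enorm_eq_nnnorm]
    rw [hlint]
    have hsum : ∑' n, ENNReal.ofReal (a n) ^ (2:ℝ) * c
        = ENNReal.ofReal (∑' n, a n * a n) * c := by
      have hsummable : Summable (fun n => a n * a n) := by
        have h2 : Summable (fun n : ℕ => 1 / ((n:ℝ)) ^ 2) := by
          rw [Real.summable_one_div_nat_pow]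
          norm_num
        have h3 := (summable_nat_add_iff 1).2 h2
        apply h3.congr
        intro n
        rw [hadef]
        push_cast
        field_simp
      rw [ENNReal.tsum_mul_right]
      congr 1
      rw [ENNReal.ofReal_tsum_of_nonneg (fun n => mul_nonneg (ha_pos n).le (ha_pos n).le)
        hsummable]
      congr 1
      ext n
      rw [ENNReal.ofReal_mul (ha_pos n).le]
      rw [show (2:ℝ) = ((2:ℕ):ℝ) by norm_num, ENNReal.rpow_natCast]
      ring
    rw [hsum]
    exact ENNReal.rpow_lt_top_of_nonneg (by norm_num)
      (ENNReal.mul_ne_top ENNReal.ofReal_ne_top hcfin.ne)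
  -- the coefficient function
  set u : G → ℂ := fun x => ∫ t, f (x⁻¹ * t) * conj (g t) ∂μ with hudef
  refine ⟨u, ⟨f, g, hf2, hg2, fun x => rfl⟩, ?_⟩
  -- real form of u
  set φ : G → G → ℝ := fun x => (x • V).indicator w with hφdef
  have hu_re : ∀ x, u x = Complex.ofReal (∫ t, φ x t ∂μ) := by
    intro x
    have hpw : (fun t => f (x⁻¹ * t) * conj (g t)) = fun t => ((φ x t : ℝ) : ℂ) := by
      ext t
      by_cases h : x⁻¹ * t ∈ V
      · have htx : t ∈ x • V := by
          rw [Set.mem_smul_set_iff_inv_smul_mem, smul_eq_mul]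
          exact h
        rw [hfdef, hφdef]
        simp only [Set.indicator_of_mem h, Set.indicator_of_mem htx, hgdef]
        rw [one_mul, Complex.conj_ofReal]
      · have htx : t ∉ x • V := by
          rw [Set.mem_smul_set_iff_inv_smul_mem, smul_eq_mul]
          exact h
        rw [hfdef, hφdef]
        simp [Set.indicator_of_notMem h, Set.indicator_of_notMem htx]
    rw [hudef]
    simp only
    rw [hpw]
    exact integral_ofReal
  have hφnonneg : ∀ x t, 0 ≤ φ x t := by
    intro x t
    rw [hφdef]
    exact Set.indicator_nonneg (fun t _ => hw_nonneg t) t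
  have hφint : ∀ x, Integrable (φ x) μ := by
    intro x
    rw [hφdef]
    simp only
    rw [integrable_indicator_iff ((hVcl.smul x).measurableSet)]
    refine Measure.integrableOn_of_bounded ?_ hwmeas.aestronglyMeasurable
      (M := 1) (ae_of_all _ ?_)
    · rw [measure_smul]
      exact hVc.measure_lt_top.ne
    · intro t
      rw [Real.norm_eq_abs, abs_of_nonneg (hw_nonneg t)]
      exact hw_le_one t
  -- lower bound on each translate
  have hlow : ∀ n, ∀ x ∈ A n, ENNReal.ofReal (a n * c.toReal) ≤ (‖u x‖₊ : ℝ≥0∞) := by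
    intro n x hx
    have hint_le : a n * c.toReal ≤ ∫ t, φ x t ∂μ := by
      have hind : Integrable ((A n).indicator (fun _ => a n)) μ := by
        rw [integrable_indicator_iff (hA n)]
        apply integrableOn_const
        rw [hmuA n]
        exact hcfin.ne
        simp
      have hptle : ∀ t, (A n).indicator (fun _ => a n) t ≤ φ x t := by
        intro t
        by_cases ht : t ∈ A n
        · rw [Set.indicator_of_mem ht]
          obtain ⟨w1, hw1, rfl⟩ := hx
          obtain ⟨w2, hw2, rfl⟩ := ht
          have hmem : (s n • w1)⁻¹ * (s n • w2) ∈ V := by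
            apply hWWV
            rw [smul_eq_mul, smul_eq_mul]
            have : (s n * w1)⁻¹ * (s n * w2) = w1⁻¹ * w2 := by group
            rw [this]
            exact Set.mul_mem_mul (by rw [← hWsymm]; exact Set.inv_mem_inv.mpr hw1) hw2
          have htmem : (s n • w2) ∈ (s n • w1) • V := by
            rw [Set.mem_smul_set_iff_inv_smul_mem, smul_eq_mul]
            exact hmem
          rw [hφdef]
          simp only [Set.indicator_of_mem htmem]
          have : γ (s n • w2) = ENNReal.ofReal (a n) := by
            apply hval
            exact ⟨w2, hw2, rfl⟩
          show a n ≤ (γ (s n • w2)).toReal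
          rw [this, ENNReal.toReal_ofReal (ha_pos n).le]
        · rw [Set.indicator_of_notMem ht]
          exact hφnonneg x t
      calc a n * c.toReal = (μ (A n)).toReal • a n := by
            rw [hmuA n, smul_eq_mul]; ring
      _ = ∫ t, (A n).indicator (fun _ => a n) t ∂μ := (integral_indicator_const _ (hA n)).symm
      _ ≤ ∫ t, φ x t ∂μ := integral_mono hind (hφint x) hptle
    have h0 : (0:ℝ) ≤ ∫ t, φ x t ∂μ := le_trans (by positivity) hint_le
    rw [hu_re x]
    have : (‖(Complex.ofReal (∫ t, φ x t ∂μ))‖₊ : ℝ≥0∞) = ENNReal.ofReal (∫ t, φ x t ∂μ) := by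
      rw [show ‖(Complex.ofReal (∫ t, φ x t ∂μ))‖₊ = ‖∫ t, φ x t ∂μ‖₊ by
        simp [Complex.nnnorm_real]]
      exact Real.enorm_eq_ofReal h0
    rw [this]
    exact ENNReal.ofReal_le_ofReal hint_le
  -- conclude
  intro hint
  have hfin : ∫⁻ x, (‖u x‖₊ : ℝ≥0∞) ∂μ < ⊤ := hint.2
  have htop : (⊤:ℝ≥0∞) ≤ ∫⁻ x, (‖u x‖₊ : ℝ≥0∞) ∂μ := by
    have h1 : ∫⁻ x in ⋃ n, A n, (‖u x‖₊ : ℝ≥0∞) ∂μ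
        = ∑' n, ∫⁻ x in A n, (‖u x‖₊ : ℝ≥0∞) ∂μ := lintegral_iUnion hA hdisj _
    have h2 : ∀ n, ENNReal.ofReal (a n) * (c * c) ≤ ∫⁻ x in A n, (‖u x‖₊ : ℝ≥0∞) ∂μ := by
      intro n
      calc ENNReal.ofReal (a n) * (c * c)
          = ENNReal.ofReal (a n * c.toReal) * μ (A n) := by
            rw [ENNReal.ofReal_mul (ha_pos n).le, ENNReal.ofReal_toReal hcfin.ne, hmuA n]
            ring
      _ = ∫⁻ _ in A n, ENNReal.ofReal (a n * c.toReal) ∂μ := by rw [setLIntegral_const]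
      _ ≤ ∫⁻ x in A n, (‖u x‖₊ : ℝ≥0∞) ∂μ := by
            apply lintegral_mono_ae
            rw [ae_restrict_iff' (hA n)]
            exact ae_of_all _ (hlow n)
    have h3 : (⊤:ℝ≥0∞) = ∑' n, ENNReal.ofReal (a n) * (c * c) := by
      rw [ENNReal.tsum_mul_right]
      have hsumtop : ∑' n, ENNReal.ofReal (a n) = ⊤ := by
        by_contra h
        have hs := ENNReal.summable_toReal h
        have : Summable a := by
          apply hs.congr
          intro n
          rw [ENNReal.toReal_ofReal (ha_pos n).le]
        have h4 : Summable (fun n : ℕ => 1 / ((n:ℝ))) := by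
          rw [← summable_nat_add_iff 1]
          apply this.congr
          intro n
          rw [hadef]
          push_cast
          ring
        exact Real.not_summable_one_div_natCast h4
      rw [hsumtop, ENNReal.top_mul]
      exact (mul_ne_zero hc0.ne' hc0.ne')
    calc (⊤:ℝ≥0∞) = ∑' n, ENNReal.ofReal (a n) * (c * c) := h3
    _ ≤ ∑' n, ∫⁻ x in A n, (‖u x‖₊ : ℝ≥0∞) ∂μ := ENNReal.tsum_le_tsum h2
    _ = ∫⁻ x in ⋃ n, A n, (‖u x‖₊ : ℝ≥0∞) ∂μ := h1.symm
    _ ≤ ∫⁻ x, (‖u x‖₊ : ℝ≥0∞) ∂μ := setLIntegral_le_lintegral _ _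
  exact absurd hfin (by simp [top_le_iff.mp htop])

lemma coeff_cont_bound [CompactSpace G] (μ : Measure G) [μ.IsHaarMeasure]
    {u f g : G → ℂ} (hf : MemLp f 2 μ) (hg : MemLp g 2 μ) (hc : IsCoeff μ u f g) :
    Continuous u ∧ ∀ s, ‖u s‖ ≤ (eLpNorm f 2 μ).toReal * (eLpNorm g 2 μ).toReal := by
  set f₂ : Lp ℂ 2 μ := hf.toLp f
  set g₂ : Lp ℂ 2 μ := hg.toLp g
  let Φ : C(G, C(G, G)) := (ContinuousMap.mk (fun p : G × G => p.1⁻¹ * p.2)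
    (by fun_prop)).curry
  have hΦ : ∀ s : G, MeasurePreserving (⇑(Φ s)) μ μ := fun s =>
    measurePreserving_mul_left μ s⁻¹
  let h : G → Lp ℂ 2 μ := fun s => Lp.compMeasurePreserving (⇑(Φ s)) (hΦ s) f₂
  have hcont : Continuous h := by
    have h1 : Continuous (fun s : G =>
        (⟨Φ s, hΦ s⟩ : {f : C(G, G) // MeasurePreserving f μ μ})) :=
      Continuous.subtype_mk Φ.continuous _
    exact (Lp.compMeasurePreserving_continuous μ μ ℂ (by norm_num)).comp
      (continuous_const.prodMk h1 : Continuous fun s : G => (f₂, _))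
  have hrepr : ∀ s, u s = (inner ℂ g₂ (h s) : ℂ) := by
    intro s
    rw [hc s, L2.inner_def]
    have e1 : (h s : G → ℂ) =ᵐ[μ] fun t => f (s⁻¹ * t) := by
      refine (Lp.coeFn_compMeasurePreserving f₂ (hΦ s)).trans ?_
      exact (hΦ s).quasiMeasurePreserving.ae_eq_comp hf.coeFn_toLp
    have e2 : (g₂ : G → ℂ) =ᵐ[μ] g := hg.coeFn_toLp
    refine integral_congr_ae ?_
    filter_upwards [e1, e2] with t h1 h2
    rw [RCLike.inner_apply, h1, h2, mul_comm]
  constructor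
  · have : Continuous fun s => (inner ℂ g₂ (h s) : ℂ) := continuous_const.inner hcont
    exact this.congr fun s => (hrepr s).symm
  · intro s
    rw [hrepr s]
    calc ‖(inner ℂ g₂ (h s) : ℂ)‖ ≤ ‖g₂‖ * ‖h s‖ := norm_inner_le_norm _ _
    _ = (eLpNorm f 2 μ).toReal * (eLpNorm g 2 μ).toReal := by
        rw [Lp.norm_compMeasurePreserving, mul_comm]
        simp [f₂, g₂, Lp.norm_toLp]


/-- `S¹A(G) = A(G) ∩ L¹(G)` equals `A(G)` (as a set, with equivalent
norms) iff `G` is compact.  Moreover when `G` is compact (with normalized Haar measure)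
the identity `j : A(G) → S¹A(G)` satisfies `‖j‖ = 2`:  one has
`‖u‖_{S¹A} ≤ 2 ‖u‖_{A}` for all `u ∈ A(G)`, with equality for the constant function `1`
(where `‖1‖_A = 1` and `‖1‖_{S¹A} = 2`); and `j⁻¹` is contractive. -/
theorem SoneA_eq_A_iff_compact
    (μ : Measure G) [μ.IsHaarMeasure] :
    ((∀ u : G → ℂ, InFourier μ u → Integrable u μ) ↔ IsCompact (Set.univ : Set G)) ∧
    (∀ u : G → ℂ, InFourier μ u → ANorm μ u ≤ SoneANorm μ u) ∧
    (IsCompact (Set.univ : Set G) → μ Set.univ = 1 →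
      (∀ u : G → ℂ, InFourier μ u → SoneANorm μ u ≤ 2 * ANorm μ u) ∧
      ANorm μ (fun _ : G => (1:ℂ)) = 1 ∧
      SoneANorm μ (fun _ : G => (1:ℂ)) = 2) := by
  constructor
  · constructor
    · intro H
      by_contra hnc
      obtain ⟨u, hu, hni⟩ := noncompact_witness μ hnc
      exact hni (H u hu)
    · intro hcomp u hu
      haveI : CompactSpace G := isCompact_univ_iff.mp hcomp
      obtain ⟨f, g, hf, hg, hc⟩ := hu
      obtain ⟨hcont, hbd⟩ := coeff_cont_bound μ hf hg hc
      exact ⟨hcont.aestronglyMeasurable,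
        HasFiniteIntegral.of_bounded (C := (eLpNorm f 2 μ).toReal * (eLpNorm g 2 μ).toReal)
          (ae_of_all _ hbd)⟩
  constructor
  · intro u _
    have h0 : 0 ≤ (eLpNorm u 1 μ).toReal := ENNReal.toReal_nonneg
    unfold SoneANorm
    linarith
  · intro hcomp hμ1
    haveI : CompactSpace G := isCompact_univ_iff.mp hcomp
    haveI : IsFiniteMeasure μ := ⟨by rw [hμ1]; exact ENNReal.one_lt_top⟩
    have hμ0 : μ ≠ 0 := by
      intro h
      simp [h] at hμ1
    have hANorm1 : ANorm μ (fun _ : G => (1:ℂ)) = 1 := by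
      have hconst : eLpNorm (fun _ : G => (1:ℂ)) 2 μ = 1 := by
        rw [eLpNorm_const (1:ℂ) (by norm_num) hμ0]
        simp [hμ1]
      have hcoeff : IsCoeff μ (fun _ : G => (1:ℂ)) (fun _ => 1) (fun _ => 1) := by
        intro s
        simp [integral_const, hμ1, measureReal_def]
      refine le_antisymm ?_ ?_
      · refine csInf_le ⟨0, ?_⟩ ?_
        · rintro c ⟨f, g, hf, hg, hc, rfl⟩; positivity
        · exact ⟨fun _ => 1, fun _ => 1, memLp_const 1, memLp_const 1, hcoeff, by
            rw [hconst]; norm_num⟩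
      · refine le_csInf ⟨1, fun _ => 1, fun _ => 1, memLp_const 1, memLp_const 1, hcoeff, by
          rw [hconst]; norm_num⟩ ?_
        rintro c ⟨f, g, hf, hg, hc, rfl⟩
        obtain ⟨-, hbd⟩ := coeff_cont_bound μ hf hg hc
        simpa using hbd 1
    have hL1const : (eLpNorm (fun _ : G => (1:ℂ)) 1 μ).toReal = 1 := by
      rw [eLpNorm_const (1:ℂ) one_ne_zero hμ0]
      simp [hμ1]
    refine ⟨?_, hANorm1, ?_⟩
    · intro u hu
      have key : (eLpNorm u 1 μ).toReal ≤ ANorm μ u := by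
        refine le_csInf ?_ ?_
        · obtain ⟨f, g, hf, hg, hc⟩ := hu
          exact ⟨_, f, g, hf, hg, hc, rfl⟩
        · rintro c ⟨f, g, hf, hg, hc, rfl⟩
          obtain ⟨-, hbd⟩ := coeff_cont_bound μ hf hg hc
          have h1 : eLpNorm u 1 μ ≤
              ENNReal.ofReal ((eLpNorm f 2 μ).toReal * (eLpNorm g 2 μ).toReal) := by
            have := eLpNorm_le_of_ae_bound (p := 1) (μ := μ) (ae_of_all _ hbd)
            simpa [hμ1] using this
          refine ENNReal.toReal_le_of_le_ofReal ?_ h1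
          positivity
      unfold SoneANorm
      linarith
    · unfold SoneANorm
      rw [hANorm1, hL1const]
      norm_num


end
end

section
/- Let G be a locally compact group, S a compact subset of G, and H a closed non-open subgroup (so S ∩ H is compact and Haar-null). For every ε > 0 and every compact neighbourhood C of S ∩ H with m(C) < ε, there is a symmetric neighbourhood U of the identity with (S ∩ H)U² ⊆ C such that the function v(s) = m(sU ∩ (S∩H)U)/m(U) satisfies: ‖v‖_∞ = 1, v = 1 on S ∩ H, supp(v) ⊆ (S∩H)U² ⊆ C, and v ∈ A(G) with v(s) = (1/m(U))⟨λ(s)1_U, 1_{(S∩H)U}⟩. -/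
open MeasureTheory Filter Topology ComplexConjugate
open scoped ENNReal Pointwise

noncomputable section

variable {G : Type} [Group G] [TopologicalSpace G] [IsTopologicalGroup G]
  [LocallyCompactSpace G] [MeasurableSpace G] [BorelSpace G]

/-- Let `S ⊆ G` be compact and `H` a closed non-open subgroup (so
`S ∩ H` is compact and Haar-null).  For every `ε > 0` and every compact neighbourhood
`C` of `S ∩ H` with `m(C) < ε`, there is a symmetric neighbourhood `U` of the identity
with `(S∩H)U² ⊆ C` such that `v(s) = m(sU ∩ (S∩H)U)/m(U)` satisfies `‖v‖_∞ = 1`,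
`v = 1` on `S ∩ H`, `supp v ⊆ (S∩H)U² ⊆ C`, and
`v ∈ A(G)` with `v(s) = (1/m(U)) ⟨λ(s)1_U, 1_{(S∩H)U}⟩`. -/
theorem fourier_bump_function
    (μ : Measure G) [μ.IsHaarMeasure]
    (S : Set G) (hS : IsCompact S)
    (H : Subgroup G) (hHclosed : IsClosed (H : Set G)) (hHnotopen : ¬ IsOpen (H : Set G))
    (hne : (S ∩ ↑H).Nonempty)
    (ε : ℝ) (hε : 0 < ε)
    (C : Set G) (hCcpt : IsCompact C) (hCnbhd : ∀ x ∈ S ∩ ↑H, C ∈ 𝓝 x)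
    (hCsmall : μ C < ENNReal.ofReal ε) :
    ∃ U ∈ 𝓝 (1 : G), U = U⁻¹ ∧ (S ∩ ↑H) * U * U ⊆ C ∧
      ∀ v : G → ℂ,
        (v = fun s => (((μ (((fun x => s * x) '' U) ∩ ((S ∩ ↑H) * U))).toReal /
            (μ U).toReal : ℝ) : ℂ)) →
        (∀ s, ‖v s‖ ≤ 1) ∧ (∃ s, ‖v s‖ = 1) ∧
        (∀ s ∈ S ∩ ↑H, v s = 1) ∧
        Function.support v ⊆ (S ∩ ↑H) * U * U ∧
        (∀ s : G, v s = (((μ U).toReal)⁻¹ : ℂ) *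
          ∫ t, U.indicator (fun _ => (1:ℂ)) (s⁻¹ * t) *
            ((S ∩ ↑H) * U).indicator (fun _ => (1:ℂ)) t ∂μ) ∧
        InFourier μ v := by
  set K := S ∩ (H : Set G) with hKdef
  have hKcpt : IsCompact K := hS.inter_right hHclosed
  have hKint : K ⊆ interior C := fun x hx => mem_interior_iff_mem_nhds.2 (hCnbhd x hx)
  obtain ⟨V, hV, hKV⟩ := compact_open_separated_mul_right hKcpt isOpen_interior hKint
  obtain ⟨V₂, hV₂open, hV₂one, hV₂sub⟩ := exists_open_nhds_one_mul_subset hV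
  obtain ⟨L, hLcpt, hL⟩ := exists_compact_mem_nhds (1 : G)
  set U0 : Set G := V₂ ∩ interior L with hU0def
  have hU0open : IsOpen U0 := hV₂open.inter isOpen_interior
  have hU0one : (1 : G) ∈ U0 := ⟨hV₂one, mem_interior_iff_mem_nhds.2 hL⟩
  set U : Set G := U0 ∩ U0⁻¹ with hUdef
  have hUopen : IsOpen U := hU0open.inter hU0open.inv
  have hUone : (1 : G) ∈ U := ⟨hU0one, by simpa using hU0one⟩
  have hUnhds : U ∈ 𝓝 (1 : G) := hUopen.mem_nhds hUone
  have hUsymm : U = U⁻¹ := by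
    ext x
    simp only [hUdef, Set.mem_inter_iff, Set.mem_inv, inv_inv]
    tauto
  have hUV₂ : U ⊆ V₂ := fun x hx => hx.1.1
  have hUL : U ⊆ L := fun x hx => interior_subset hx.1.2
  have hUμfin : μ U ≠ ⊤ := ((measure_mono hUL).trans_lt hLcpt.measure_lt_top).ne
  have hUμpos : μ U ≠ 0 := (hUopen.measure_pos μ ⟨1, hUone⟩).ne'
  have hUμR : 0 < (μ U).toReal := ENNReal.toReal_pos hUμpos hUμfin
  have hKUU : K * U * U ⊆ C := by
    rw [mul_assoc]
    refine (Set.mul_subset_mul_left ?_).trans ((hKV.trans interior_subset))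
    exact (Set.mul_subset_mul hUV₂ hUV₂).trans hV₂sub
  -- basic facts about K*U
  have hKUopen : IsOpen (K * U) := hUopen.mul_left
  have hKUfin : μ (K * U) ≠ ⊤ :=
    ((measure_mono (Set.mul_subset_mul_left hUL)).trans_lt (hKcpt.mul hLcpt).measure_lt_top).ne
  -- image is smul
  have himg : ∀ s : G, (fun x => s * x) '' U = s • U := fun s => by
    simp [← Set.image_smul, smul_eq_mul]
  have hμsU : ∀ s : G, μ (s • U) = μ U := fun s => measure_smul μ s U
  refine ⟨U, hUnhds, hUsymm, hKUU, ?_⟩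
  intro v hv
  -- key pointwise value of v
  have hvval : ∀ s : G, v s = (((μ ((s • U) ∩ (K * U))).toReal / (μ U).toReal : ℝ) : ℂ) := by
    intro s; rw [hv]; simp only [himg]
  have hle : ∀ s : G, μ ((s • U) ∩ (K * U)) ≤ μ U := fun s =>
    (measure_mono Set.inter_subset_left).trans_eq (hμsU s)
  have hratio_nonneg : ∀ s : G, 0 ≤ (μ ((s • U) ∩ (K * U))).toReal / (μ U).toReal := fun s =>
    div_nonneg ENNReal.toReal_nonneg ENNReal.toReal_nonneg
  have hratio_le : ∀ s : G, (μ ((s • U) ∩ (K * U))).toReal / (μ U).toReal ≤ 1 := fun s => by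
    rw [div_le_one hUμR]
    exact ENNReal.toReal_mono hUμfin (hle s)
  -- v = 1 on K
  have hone : ∀ s ∈ K, v s = 1 := by
    intro s hs
    have hsub : s • U ⊆ K * U := by
      rintro x ⟨u, hu, rfl⟩
      exact Set.mul_mem_mul hs hu
    rw [hvval s, Set.inter_eq_left.2 hsub, hμsU s, div_self hUμR.ne']
    norm_num
  -- the integral formula
  have hint : ∀ s : G,
      (∫ t, U.indicator (fun _ => (1:ℂ)) (s⁻¹ * t) *
        (K * U).indicator (fun _ => (1:ℂ)) t ∂μ)
      = ((μ ((s • U) ∩ (K * U))).toReal : ℂ) := by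
    intro s
    have hpt : ∀ t, U.indicator (fun _ => (1:ℂ)) (s⁻¹ * t) *
        (K * U).indicator (fun _ => (1:ℂ)) t
        = ((s • U) ∩ (K * U)).indicator (fun _ => (1:ℂ)) t := by
      intro t
      have hmem : t ∈ s • U ↔ s⁻¹ * t ∈ U := by
        rw [Set.mem_smul_set_iff_inv_smul_mem]; rfl
      have h1 : U.indicator (fun _ => (1:ℂ)) (s⁻¹ * t)
          = (s • U).indicator (fun _ => (1:ℂ)) t := by
        by_cases h : t ∈ s • U
        · rw [Set.indicator_of_mem h, Set.indicator_of_mem (hmem.1 h)]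
        · rw [Set.indicator_of_notMem h, Set.indicator_of_notMem (fun hc => h (hmem.2 hc))]
      rw [h1, ← Set.inter_indicator_mul]
      simp
    simp only [hpt]
    rw [integral_indicator_const (1:ℂ) (((hUopen.smul s).inter hKUopen).measurableSet)]
    simp [Measure.real]
  constructor
  · intro s
    rw [hvval s]
    rw [Complex.norm_real, Real.norm_eq_abs, abs_of_nonneg (hratio_nonneg s)]
    exact hratio_le s
  refine ⟨?_, hone, ?_, ?_, ?_⟩
  · obtain ⟨s, hs⟩ := hne
    exact ⟨s, by rw [hone s hs]; simp⟩
  · -- support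
    intro s hs
    rw [Function.mem_support, hvval s] at hs
    have hne' : ((s • U) ∩ (K * U)).Nonempty := by
      rw [Set.nonempty_iff_ne_empty]
      intro hc
      apply hs
      rw [hc, measure_empty]
      simp
    obtain ⟨x, ⟨u, hu, rfl⟩, k, hk, u', hu', hx⟩ := hne'
    have : s = k * u' * u⁻¹ := by
      have hx' : k * u' = s * u := hx
      rw [hx']
      group
    rw [this]
    exact Set.mul_mem_mul (Set.mul_mem_mul hk hu') (by rw [hUsymm]; exact Set.inv_mem_inv.2 hu)
  · -- integral formula
    intro s
    rw [hint s, hvval s, div_eq_inv_mul]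
    push_cast
    ring
  · -- InFourier
    refine ⟨U.indicator (fun _ => ((((μ U).toReal)⁻¹ : ℝ) : ℂ)),
      (K * U).indicator (fun _ => (1:ℂ)),
      memLp_indicator_const 2 hUopen.measurableSet _ (Or.inr hUμfin),
      memLp_indicator_const 2 hKUopen.measurableSet _ (Or.inr hKUfin), ?_⟩
    intro s
    have hconj : ∀ t, conj ((K * U).indicator (fun _ => (1:ℂ)) t)
        = (K * U).indicator (fun _ => (1:ℂ)) t := by
      intro t
      by_cases h : t ∈ K * U <;> simp [h]
    have hpull : ∀ t, U.indicator (fun _ => ((((μ U).toReal)⁻¹ : ℝ) : ℂ)) (s⁻¹ * t)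
        = ((((μ U).toReal)⁻¹ : ℝ) : ℂ) * U.indicator (fun _ => (1:ℂ)) (s⁻¹ * t) := by
      intro t
      by_cases h : s⁻¹ * t ∈ U <;> simp [h]
    simp only [hconj, hpull, mul_assoc]
    rw [integral_const_mul, hint s, hvval s, div_eq_inv_mul]
    push_cast
    ring


end
end
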